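/- Let F be a nonempty family of subsets of a ground set E of size n, all of whose members have at most m elements. Consider a nonnegative weighting x : E → ℝ≥0 and sort the elements so that x(e_1) ≥ ... ≥ x(e_n). If the best-in greedy algorithm (scanning elements in this order and adding an element whenever the partial solution remains contained in some member of F) outputs a set A ∈ F, and S ∈ F is a maximum-weight member, then x(S) ≤ m · x(A). -/

import Mathlib

open scoped Classical in
/-- The best-in greedy algorithm: scan the elements of the list in order and add
an element whenever the extended partial solution is still contained in some
member of the family `F`. -/
noncomputable def bestInGreedy {E : Type*} [DecidableEq E]
    (F : Finset (Finset E)) (l : List E) : Finset E :=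
  l.foldl (fun P v => if ∃ S ∈ F, insert v P ⊆ S then insert v P else P) ∅

open scoped Classical in
private lemma greedy_mono {E : Type*} [DecidableEq E] (F : Finset (Finset E)) :
    ∀ (l : List E) (P : Finset E),
      P ⊆ l.foldl (fun P v => if ∃ S ∈ F, insert v P ⊆ S then insert v P else P) P := by
  intro l
  induction l with
  | nil => intro P; simp
  | cons v t ih =>
    intro P
    simp only [List.foldl_cons]
    refine subset_trans ?_ (ih _)
    split_ifs with h
    · exact Finset.subset_insert _ _
    · exact subset_refl _

open scoped Classical in
private lemma greedy_key {E : Type*} [DecidableEq E] (F : Finset (Finset E)) :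
    ∀ (l : List E),
      (∀ u ∈ l, ∀ S ∈ F, u ∉ S) ∨
      ∃ (l1 l2 : List E) (a : E),
        l = l1 ++ a :: l2 ∧ a ∈ bestInGreedy F l ∧ (∀ u ∈ l1, ∀ S ∈ F, u ∉ S) := by
  intro l
  induction l with
  | nil => left; simp
  | cons v t ih =>
    by_cases h : ∃ S ∈ F, insert v (∅ : Finset E) ⊆ S
    · right
      refine ⟨[], t, v, by simp, ?_, by simp⟩
      unfold bestInGreedy
      simp only [List.foldl_cons, if_pos h]
      exact greedy_mono F t (insert v ∅) (Finset.mem_insert_self v ∅)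
    · have hv : ∀ S ∈ F, v ∉ S := by
        intro S hSF hvS
        exact h ⟨S, hSF, by simpa using hvS⟩
      have hrw : bestInGreedy F (v :: t) = bestInGreedy F t := by
        unfold bestInGreedy
        simp only [List.foldl_cons, if_neg h]
      rcases ih with hl | ⟨l1, l2, a, heq, ha, hrej⟩
      · left
        intro u hu
        rcases List.mem_cons.mp hu with rfl | hu
        · exact hv
        · exact hl u hu
      · right
        refine ⟨v :: l1, l2, a, by simp [heq], by rwa [hrw], ?_⟩
        intro u hu
        rcases List.mem_cons.mp hu with rfl | hu
        · exact hv
        · exact hrej u hu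

/-- If all members of `F` have at most `m` elements, the weights are nonnegative
and the elements are scanned heaviest-first, and the best-in greedy algorithm
outputs a member `A` of `F`, then the maximum weight `x(S)` of a member of `F`
satisfies `x(S) ≤ m · x(A)`. -/
theorem stmt14 {E : Type*} [DecidableEq E] [Fintype E] (n m : ℕ)
    (F : Finset (Finset E)) (hbound : ∀ S ∈ F, S.card ≤ m)
    (x : E → ℝ) (hx : ∀ v, 0 ≤ x v)
    (e : Fin n → E) (he : Function.Bijective e)
    (hsort : ∀ i j : Fin n, i ≤ j → x (e j) ≤ x (e i))
    (A : Finset E) (hA : bestInGreedy F (List.ofFn e) = A) (hAF : A ∈ F)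
    (S : Finset E) (hS : S ∈ F) (hmax : ∀ T ∈ F, ∑ v ∈ T, x v ≤ ∑ v ∈ S, x v) :
    ∑ v ∈ S, x v ≤ (m : ℝ) * ∑ v ∈ A, x v := by
  have hAnn : 0 ≤ ∑ v ∈ A, x v := Finset.sum_nonneg fun v _ => hx v
  rcases greedy_key F (List.ofFn e) with hl | ⟨l1, l2, a, heq, ha, hrej⟩
  · -- every element of E belongs to no member of F, so S = ∅
    have hSempty : S = ∅ := by
      apply Finset.eq_empty_of_forall_notMem
      intro u hu
      exact hl u (by rcases he.2 u with ⟨j, rfl⟩; exact List.mem_ofFn.mpr ⟨j, rfl⟩) S hS hu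
    rw [hSempty]
    simp
    positivity
  · have haA : a ∈ A := hA ▸ ha
    have hlen : l1.length < n := by
      have := congrArg List.length heq
      simp at this
      omega
    set i : Fin n := ⟨l1.length, hlen⟩ with hi
    have hai : a = e i := by
      have h1 : (List.ofFn e)[l1.length]'(by simp [hlen]) = e i := by
        simp [List.getElem_ofFn]
        rfl
      have h2 : (List.ofFn e)[l1.length]'(by simp [hlen]) = a := by
        rw [List.getElem_of_eq heq, List.getElem_append_right (le_refl _)]
        simp
      rw [← h1, h2]
    -- every element of S comes at position ≥ i
    have hSb : ∀ u ∈ S, x u ≤ x a := by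
      intro u hu
      rcases he.2 u with ⟨j, rfl⟩
      rcases lt_or_ge j.val l1.length with hj | hj
      · exfalso
        have : e j ∈ l1 := by
          have h1 : e j = l1[j.val]'hj := by
            have h0 : (List.ofFn e)[j.val]'(by simp) = e j := by simp
            rw [List.getElem_of_eq heq, List.getElem_append_left hj] at h0
            exact h0.symm
          exact h1 ▸ List.getElem_mem _
        exact hrej _ this S hS hu
      · rw [hai]
        exact hsort i j hj
    calc ∑ v ∈ S, x v ≤ ∑ _v ∈ S, x a := Finset.sum_le_sum hSb
      _ = S.card * x a := by rw [Finset.sum_const, nsmul_eq_mul]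
      _ ≤ m * x a := mul_le_mul_of_nonneg_right (Nat.cast_le.mpr (hbound S hS)) (hx a)
      _ ≤ m * ∑ v ∈ A, x v :=
          mul_le_mul_of_nonneg_left (Finset.single_le_sum (fun v _ => hx v) haA) (Nat.cast_nonneg m)
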